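/- Let p'/p (coprime, 0 < p < p') have continued fraction data as in the Takahashi length construction. Then for 0 ≤ j ≤ t with zone index k = ζ(j), ⌊κ_j · p/p'⌋ = κ̃_j - [k ≡ 0 (mod 2)], where κ_j is the j-th Takahashi length and κ̃_j the j-th truncated Takahashi length, and [·] is 1 if the condition holds, else 0. -/

import Mathlib

/-- The value of a finite continued fraction `[c₀; c₁, …]`. -/
def cfVal : List ℚ → ℚ
  | [] => 0
  | [x] => x
  | x :: xs => x + 1 / cfVal xs

lemma cfVal_cons (x : ℚ) (l : List ℚ) (h : l ≠ []) :
    cfVal (x :: l) = x + 1 / cfVal l := by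
  cases l with
  | nil => exact absurd rfl h
  | cons a t => rfl

theorem stmt15 (p p' : ℤ) (n : ℕ) (c : ℕ → ℤ) (y z : ℕ → ℤ) (tz : ℕ → ℤ)
    (hp : 0 < p) (hpp' : p < p') (hcop : IsCoprime p p')
    (hc0 : 0 ≤ c 0) (hci : ∀ i, 0 < i → i < n → 1 ≤ c i) (hcn : 2 ≤ c n)
    (hcf : (p' : ℚ) / (p : ℚ) = cfVal (List.ofFn fun i : Fin (n + 1) => (c i : ℚ)))
    (hy0 : y 0 = 0) (hy1 : y 1 = 1) (hz0 : z 0 = 1) (hz1 : z 1 = 0)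
    (hy : ∀ k, 1 ≤ k → k ≤ n + 1 → y (k + 1) = c (k - 1) * y k + y (k - 1))
    (hz : ∀ k, 1 ≤ k → k ≤ n + 1 → z (k + 1) = c (k - 1) * z k + z (k - 1))
    (htz : ∀ k, tz k = -1 + ∑ i ∈ Finset.range k, c i) :
    ∀ (j : ℤ) (k : ℕ), k ≤ n → 0 ≤ j → j ≤ tz (n + 1) - 1 →
      tz k < j → j ≤ tz (k + 1) →
      ⌊(((y k + (j - tz k) * y (k + 1)) * p : ℤ) : ℚ) / (p' : ℚ)⌋
        = z k + (j - tz k) * z (k + 1) - (if k % 2 = 0 then 1 else 0) := by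
  have hp'0 : (0:ℤ) < p' := lt_trans hp hpp'
  have hpQ : ((p:ℤ):ℚ) ≠ 0 := by exact_mod_cast hp.ne'
  have hp'Q : (0:ℚ) < ((p':ℤ):ℚ) := by exact_mod_cast hp'0
  have hcnn : ∀ i, i ≤ n → (0:ℤ) ≤ c i := by
    intro i hi
    rcases eq_or_lt_of_le hi with h | h
    · subst h; linarith
    · rcases Nat.eq_zero_or_pos i with h0 | h0
      · subst h0; exact hc0
      · linarith [hci i h0 h]
  have hc1 : ∀ i, 1 ≤ i → i ≤ n → (1:ℤ) ≤ c i := by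
    intro i h1 h2
    rcases eq_or_lt_of_le h2 with h | h
    · subst h; linarith
    · exact hci i h1 h
  -- nonnegativity of z
  have hznn : ∀ k, k ≤ n+2 → (0:ℤ) ≤ z k := by
    intro k
    induction k using Nat.strong_induction_on with
    | _ k ih =>
      intro hk
      obtain _ | _ | k := k
      · rw [hz0]; norm_num
      · rw [hz1]
      · have hzr := hz (k+1) (by omega) (by omega)
        simp only [Nat.add_sub_cancel] at hzr
        rw [hzr]
        have h1 := ih (k+1) (by omega) (by omega)
        have h2 := ih k (by omega) (by omega)
        have h3 := hcnn k (by omega)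
        nlinarith
  -- the tail values of the continued fraction
  set v : ℕ → ℚ := fun d => cfVal (List.ofFn fun i : Fin (d+1) => ((c (n - d + ↑i) : ℤ) : ℚ)) with hv
  have hv0 : v 0 = ((c n : ℤ) : ℚ) := by
    simp only [hv]
    have : (fun i : Fin 1 => ((c (n - 0 + ↑i) : ℤ) : ℚ)) = fun i : Fin 1 => ((c n : ℤ) : ℚ) := by
      funext i
      have : n - 0 + (i : ℕ) = n := by omega
      rw [this]
    rw [this]
    simp [cfVal, List.ofFn_succ]
  have hvrec : ∀ d, d < n → v (d+1) = ((c (n-d-1) : ℤ) : ℚ) + 1 / v d := by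
    intro d hd
    simp only [hv]
    rw [List.ofFn_succ]
    have hfun : (fun i : Fin (d+1) => ((c (n-(d+1)+ ↑i.succ) : ℤ) : ℚ))
        = (fun i : Fin (d+1) => ((c (n-d+↑i) : ℤ) : ℚ)) := by
      funext i
      have : n-(d+1)+ (i.succ : ℕ) = n-d+↑i := by rw [Fin.val_succ]; omega
      rw [this]
    rw [hfun, cfVal_cons]
    · have : n - (d+1) + ((0 : Fin (d+2)) : ℕ) = n - d - 1 := by
        simp only [Fin.val_zero]; omega
      rw [this]
    · simp
  have hvgt : ∀ d, d < n → 1 < v d := by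
    intro d
    induction d with
    | zero =>
      intro h
      rw [hv0]
      have : (2:ℚ) ≤ ((c n : ℤ) : ℚ) := by exact_mod_cast hcn
      linarith
    | succ d ih =>
      intro h
      rw [hvrec d (by omega)]
      have h1 : 1 < v d := ih (by omega)
      have h2 : (1:ℚ) ≤ ((c (n-d-1) : ℤ) : ℚ) := by
        have := hc1 (n-d-1) (by omega) (by omega)
        exact_mod_cast this
      have h3 : (0:ℚ) < 1 / v d := by positivity
      linarith
  have hvn : v n = ((p':ℤ):ℚ) / ((p:ℤ):ℚ) := by
    simp only [hv]
    have : (fun i : Fin (n+1) => ((c (n - n + ↑i) : ℤ) : ℚ)) = fun i : Fin (n+1) => ((c ↑i : ℤ) : ℚ) := by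
      funext i
      have : n - n + (i : ℕ) = (i : ℕ) := by omega
      rw [this]
    rw [this, ← hcf]
  -- the invariant
  have hJ : ∀ k, k ≤ n → ((p':ℤ):ℚ) * (v (n-k) * ((z (k+1) : ℤ):ℚ) + ((z k : ℤ):ℚ))
      = ((p:ℤ):ℚ) * (v (n-k) * ((y (k+1) : ℤ):ℚ) + ((y k : ℤ):ℚ)) := by
    intro k
    induction k with
    | zero =>
      intro _
      rw [Nat.sub_zero, hvn, hy0, hy1, hz0, hz1]
      push_cast
      field_simp
      ring
    | succ k ih =>
      intro hk
      have ihk := ih (by omega)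
      have hV1 : 1 < v (n-(k+1)) := hvgt _ (by omega)
      have hVne : v (n-(k+1)) ≠ 0 := by linarith
      have hvr := hvrec (n-(k+1)) (by omega)
      rw [show n-(k+1)+1 = n-k from by omega, show n-(n-(k+1))-1 = k from by omega] at hvr
      rw [hvr] at ihk
      have hyr := hy (k+1) (by omega) (by omega)
      have hzr := hz (k+1) (by omega) (by omega)
      simp only [Nat.add_sub_cancel] at hyr hzr
      rw [hyr, hzr]
      field_simp at ihk ⊢
      push_cast at ihk ⊢
      linear_combination ihk
  -- identify the convergents with p, p'
  have hkeyZ : p' * z (n+2) = p * y (n+2) := by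
    have hJn := hJ n le_rfl
    rw [Nat.sub_self, hv0] at hJn
    have hyr := hy (n+1) (by omega) le_rfl
    have hzr := hz (n+1) (by omega) le_rfl
    simp only [Nat.add_sub_cancel] at hyr hzr
    have : ((p' * z (n+2) : ℤ) : ℚ) = ((p * y (n+2) : ℤ) : ℚ) := by
      rw [hyr, hzr]
      push_cast
      linear_combination hJn
    exact_mod_cast this
  have hdet : ∀ k, k ≤ n+1 → y (k+1) * z k - y k * z (k+1) = (-1:ℤ)^k := by
    intro k
    induction k with
    | zero => intro _; rw [hy1, hz0, hy0, hz1]; ring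
    | succ k ih =>
      intro hk
      have hyr := hy (k+1) (by omega) (by omega)
      have hzr := hz (k+1) (by omega) (by omega)
      simp only [Nat.add_sub_cancel] at hyr hzr
      rw [hyr, hzr]
      linear_combination (-1 : ℤ) * ih (by omega)
  have hdetn := hdet (n+1) le_rfl
  have hcopyz : IsCoprime (z (n+2)) (y (n+2)) := by
    rcases neg_one_pow_eq_or ℤ (n+1) with h | h
    · rw [h] at hdetn
      exact ⟨-(y (n+1)), z (n+1), by linear_combination hdetn⟩
    · rw [h] at hdetn
      exact ⟨y (n+1), -(z (n+1)), by linear_combination -hdetn⟩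
  have hd1 : z (n+2) ∣ p := by
    have h1 : z (n+2) ∣ p * y (n+2) := ⟨p', by linear_combination -hkeyZ⟩
    exact hcopyz.dvd_of_dvd_mul_right h1
  have hd2 : p ∣ z (n+2) := by
    have h1 : p ∣ p' * z (n+2) := ⟨y (n+2), hkeyZ⟩
    exact hcop.dvd_of_dvd_mul_left h1
  have hzp : z (n+2) = p := Int.dvd_antisymm (hznn _ le_rfl) (le_of_lt hp) hd1 hd2
  have hyp' : y (n+2) = p' := by
    have h := hkeyZ
    rw [hzp] at h
    exact mul_left_cancel₀ hp.ne' (by linarith)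
  -- the error sequence f k = |y k * p - z k * p'|
  set f : ℕ → ℤ := fun k => (-1)^(k+1) * (y k * p - z k * p') with hf
  have hf0 : f 0 = p' := by simp only [hf]; rw [hy0, hz0]; ring
  have hf1 : f 1 = p := by simp only [hf]; rw [hy1, hz1]; ring
  have hfn2 : f (n+2) = 0 := by
    simp only [hf]
    rw [show n+2 = n+1+1 from rfl] at hyp' hzp
    rw [hyp', hzp]; ring
  have hfn1 : f (n+1) = 1 := by
    rw [hyp', hzp] at hdetn
    simp only [hf]
    rcases neg_one_pow_eq_or ℤ (n+1) with h | h
    · have h2 : (-1:ℤ)^(n+1+1) = -1 := by rw [pow_succ, h]; ring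
      rw [h] at hdetn; rw [h2]; linarith
    · have h2 : (-1:ℤ)^(n+1+1) = 1 := by rw [pow_succ, h]; ring
      rw [h] at hdetn; rw [h2]; linarith
  have hfrec : ∀ k, k ≤ n → f k = c k * f (k+1) + f (k+2) := by
    intro k hk
    have hyr := hy (k+1) (by omega) (by omega)
    have hzr := hz (k+1) (by omega) (by omega)
    simp only [Nat.add_sub_cancel] at hyr hzr
    simp only [hf]
    rw [show k+2 = k+1+1 from rfl] at hyr hzr
    rw [hyr, hzr]
    ring
  have hfpos : ∀ k, k ≤ n+1 → 1 ≤ f k := by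
    have aux : ∀ d, d ≤ n+1 → 1 ≤ f (n+1-d) := by
      intro d
      induction d using Nat.strong_induction_on with
      | _ d ih =>
        intro hd
        rcases Nat.eq_zero_or_pos d with rfl | hd1
        · rw [Nat.sub_zero, hfn1]
        · rcases Nat.lt_or_ge (n+1-d) 1 with hk0 | hk1
          · rw [show n+1-d = 0 from by omega, hf0]
            linarith
          · have hkn : n+1-d ≤ n := by omega
            have hrec := hfrec (n+1-d) hkn
            have h1 : 1 ≤ f (n+1-d+1) := by
              have := ih (d-1) (by omega) (by omega)
              rwa [show n+1-(d-1) = n+1-d+1 from by omega] at this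
            have h2 : 0 ≤ f (n+1-d+2) := by
              rcases Nat.lt_or_ge d 2 with h | h
              · rw [show n+1-d+2 = n+2 from by omega, hfn2]
              · have := ih (d-2) (by omega) (by omega)
                rw [show n+1-(d-2) = n+1-d+2 from by omega] at this
                linarith
            have hck : 1 ≤ c (n+1-d) := hc1 _ hk1 hkn
            have : 1*1 ≤ c (n+1-d) * f (n+1-d+1) :=
              mul_le_mul hck h1 zero_le_one (by linarith)
            linarith [hrec]
    intro k hk
    have := aux (n+1-k) (by omega)
    rwa [show n+1-(n+1-k) = k from by omega] at this
  have hfnn : ∀ k, k ≤ n+2 → 0 ≤ f k := by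
    intro k hk
    rcases Nat.lt_or_ge k (n+2) with h | h
    · linarith [hfpos k (by omega)]
    · rw [show k = n+2 from by omega, hfn2]
  have hfle : ∀ k, 1 ≤ k → k ≤ n+1 → f k ≤ p := by
    intro k hk1
    induction k, hk1 using Nat.le_induction with
    | base => intro _; rw [hf1]
    | succ k hk ih =>
      intro hk1'
      have hkn : k ≤ n := by omega
      have hrec := hfrec k hkn
      have h1 : 1 ≤ f (k+1) := hfpos (k+1) (by omega)
      have h2 : 0 ≤ f (k+2) := hfnn (k+2) (by omega)
      have hck : 1 ≤ c k := hc1 k hk hkn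
      have hkp : f k ≤ p := ih (by omega)
      nlinarith
  -- main argument
  intro j k hkn hj0 hjt hlow hhigh
  set m : ℤ := j - tz k with hm
  have htzk : tz (k+1) = tz k + c k := by
    rw [htz, htz, Finset.sum_range_succ]; ring
  have hm1 : 1 ≤ m := by omega
  have hm2 : m ≤ c k := by omega
  have hr1 : 1 ≤ f k - m * f (k+1) := by
    rcases eq_or_lt_of_le hkn with hke | hkl
    · subst hke
      have htzn : tz (k+1) = tz k + c k := htzk
      have hm3 : m ≤ c k - 1 := by omega
      have h := hfrec k le_rfl
      rw [hfn1, hfn2] at h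
      rw [hfn1]
      omega
    · have h := hfrec k hkn
      have hf2 : 1 ≤ f (k+2) := hfpos (k+2) (by omega)
      have hf1' : 1 ≤ f (k+1) := hfpos (k+1) (by omega)
      have hmm : m * f (k+1) ≤ c k * f (k+1) :=
        mul_le_mul_of_nonneg_right hm2 (by linarith)
      linarith
  have hrp : f k - m * f (k+1) ≤ p' - 1 := by
    have hf1' : 1 ≤ f (k+1) := hfpos (k+1) (by omega)
    have hmf : 1 ≤ m * f (k+1) := by nlinarith
    have hfkle : f k ≤ p' := by
      rcases Nat.eq_zero_or_pos k with rfl | hk1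
      · rw [hf0]
      · linarith [hfle k hk1 (by omega)]
    linarith
  set r : ℤ := f k - m * f (k+1) with hr
  rcases Nat.even_or_odd k with hpar | hpar
  · -- k even : floor = K - 1
    have hif : (if k % 2 = 0 then (1:ℤ) else 0) = 1 := by
      simp [Nat.even_iff.mp hpar]
    have e1 : (-1:ℤ)^(k+1) = -1 := Odd.neg_one_pow (hpar.add_one)
    have e2 : (-1:ℤ)^(k+1+1) = 1 := by rw [pow_succ, e1]; ring
    have hfk : f k = -(y k * p - z k * p') := by
      simp only [hf]; rw [e1]; ring
    have hfk1 : f (k+1) = y (k+1) * p - z (k+1) * p' := by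
      simp only [hf]; rw [e2]; ring
    have hNum : (y k + m * y (k+1)) * p
        = (z k + m * z (k+1) - 1) * p' + (p' - r) := by
      rw [hr, hfk, hfk1]; ring
    rw [hif]
    rw [Int.floor_eq_iff]
    constructor
    · rw [le_div_iff₀ hp'Q]
      have hZ : (z k + m * z (k+1) - 1) * p' ≤ (y k + m * y (k+1)) * p := by
        linarith
      exact_mod_cast hZ
    · rw [div_lt_iff₀ hp'Q]
      have hZ : (y k + m * y (k+1)) * p < (z k + m * z (k+1) - 1 + 1) * p' := by
        have hexp : (z k + m*z (k+1) - 1 + 1) * p' = (z k + m*z (k+1) - 1) * p' + p' := by ring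
        linarith
      exact_mod_cast hZ
  · -- k odd : floor = K
    have hif : (if k % 2 = 0 then (1:ℤ) else 0) = 0 := by
      simp [Nat.odd_iff.mp hpar]
    have e1 : (-1:ℤ)^(k+1) = 1 := Even.neg_one_pow (hpar.add_one)
    have e2 : (-1:ℤ)^(k+1+1) = -1 := by rw [pow_succ, e1]; ring
    have hfk : f k = y k * p - z k * p' := by
      simp only [hf]; rw [e1]; ring
    have hfk1 : f (k+1) = -(y (k+1) * p - z (k+1) * p') := by
      simp only [hf]; rw [e2]; ring
    have hNum : (y k + m * y (k+1)) * p
        = (z k + m * z (k+1)) * p' + r := by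
      rw [hr, hfk, hfk1]; ring
    rw [hif, sub_zero]
    rw [Int.floor_eq_iff]
    constructor
    · rw [le_div_iff₀ hp'Q]
      have hZ : (z k + m * z (k+1)) * p' ≤ (y k + m * y (k+1)) * p := by
        linarith
      exact_mod_cast hZ
    · rw [div_lt_iff₀ hp'Q]
      have hZ : (y k + m * y (k+1)) * p < (z k + m * z (k+1) + 1) * p' := by
        have hexp : (z k + m*z (k+1) + 1) * p' = (z k + m*z (k+1)) * p' + p' := by ring
        linarith
      exact_mod_cast hZ
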